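/- arXiv:2605.02874 — 2 statements merged into one kernel-verified Lean document; each statement's English description precedes it below -/
import Mathlib

section
/- Let l₀, m₀, s₀, l, m, s, c be natural numbers with l ≤ l₀, m ≤ m₀, s ≤ s₀, l + m + s ≥ 2, c = l₀ + m₀ + s₀, and (l, m) ≠ (0, 0). Define the initial percentile p₀ = (l₀ + 0.5·m₀ + 0.5)/(c + 1) and the new percentile p₁ = (l₀ − l + 0.5·(m₀ − m) + 1.5)/(c − (l+m+s) + 2). Then p₁ < p₀ if and only if (l + 0.5·m − 1)/(l + m + s − 1) > p₀, and p₁ > p₀ if and only if (l + 0.5·m − 1)/(l + m + s − 1) < p₀. -/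
theorem percentile_change_iff (l₀ m₀ s₀ l m s c : ℕ)
    (hl : l ≤ l₀) (hm : m ≤ m₀) (hs : s ≤ s₀) (hsum : 2 ≤ l + m + s)
    (hc : c = l₀ + m₀ + s₀) (hlm : ¬(l = 0 ∧ m = 0)) :
    (let p₀ : ℝ := ((l₀ : ℝ) + 0.5 * m₀ + 0.5) / ((c : ℝ) + 1)
     let p₁ : ℝ := ((l₀ : ℝ) - l + 0.5 * ((m₀ : ℝ) - m) + 1.5) / ((c : ℝ) - ((l : ℝ) + m + s) + 2)
     (p₁ < p₀ ↔ ((l : ℝ) + 0.5 * m - 1) / ((l : ℝ) + m + s - 1) > p₀) ∧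
     (p₁ > p₀ ↔ ((l : ℝ) + 0.5 * m - 1) / ((l : ℝ) + m + s - 1) < p₀)) := by
  dsimp only
  have hn : (2:ℝ) ≤ (l:ℝ) + m + s := by exact_mod_cast hsum
  have hcn : (l:ℝ) + m + s ≤ (c:ℝ) := by
    subst hc
    push_cast
    have : (l:ℝ) ≤ l₀ := by exact_mod_cast hl
    have : (m:ℝ) ≤ m₀ := by exact_mod_cast hm
    have : (s:ℝ) ≤ s₀ := by exact_mod_cast hs
    linarith
  have hA : (0:ℝ) < (c:ℝ) + 1 := by positivity
  have hB : (0:ℝ) < (c:ℝ) - ((l:ℝ) + m + s) + 2 := by linarith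
  have hC : (0:ℝ) < (l:ℝ) + m + s - 1 := by linarith
  constructor
  · rw [gt_iff_lt, div_lt_div_iff₀ hB hA, div_lt_div_iff₀ hA hC]
    constructor <;> intro h <;> nlinarith [h]
  · rw [gt_iff_lt, div_lt_div_iff₀ hA hB, div_lt_div_iff₀ hC hA]
    constructor <;> intro h <;> nlinarith [h]
end

section
/- Let l₂, m₂ and l*, m*, s* be nonnegative integers with l₂ + m₂ ≥ l* + m* and s₂ = s*. Then (l₂ + 0.5·m₂ + 0.5)/(l₂ + m₂ + s₂ + 1) ≥ 0.5·(l* + m* + 1)/(l* + m* + s* + 1) ≥ 0.5·(m* + 1)/(l* + m* + s* + 1). -/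
theorem second_branch_inequality (l₂ m₂ s₂ lstar mstar sstar : ℕ)
    (hlm : lstar + mstar ≤ l₂ + m₂) (hs : s₂ = sstar) :
    ((l₂ : ℝ) + 0.5 * m₂ + 0.5) / ((l₂ : ℝ) + m₂ + s₂ + 1)
        ≥ 0.5 * ((lstar : ℝ) + mstar + 1) / ((lstar : ℝ) + mstar + sstar + 1) ∧
    0.5 * ((lstar : ℝ) + mstar + 1) / ((lstar : ℝ) + mstar + sstar + 1)
        ≥ 0.5 * ((mstar : ℝ) + 1) / ((lstar : ℝ) + mstar + sstar + 1) := by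
  subst hs
  have hlmR : (lstar : ℝ) + mstar ≤ (l₂ : ℝ) + m₂ := by exact_mod_cast hlm
  have h1 : (0:ℝ) < (l₂ : ℝ) + m₂ + s₂ + 1 := by positivity
  have h2 : (0:ℝ) < (lstar : ℝ) + mstar + s₂ + 1 := by positivity
  constructor
  · rw [ge_iff_le, div_le_div_iff₀ h2 h1]
    nlinarith [mul_nonneg (sub_nonneg.2 hlmR) (Nat.cast_nonneg s₂ : (0:ℝ) ≤ s₂),
      (Nat.cast_nonneg mstar : (0:ℝ) ≤ mstar), (Nat.cast_nonneg l₂ : (0:ℝ) ≤ l₂),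
      (Nat.cast_nonneg lstar : (0:ℝ) ≤ lstar), (Nat.cast_nonneg m₂ : (0:ℝ) ≤ m₂)]
  · gcongr
    linarith [(Nat.cast_nonneg lstar : (0:ℝ) ≤ lstar)]
end
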